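/- For every l ≥ 2 and z ∈ ℤ^{2l+4}, one has z ∈ B_{l,l+1} ℤ^{2l+2} if and only if z₁ ≡ 0 (mod N), z₂ - z_{2l+3} + z_{2l+4} = 0, and z₃ + z₄ + ⋯ + z_{l+2} + z_{2l+3} = 0. -/

import Mathlib

/-- The entry in row `i`, column `j` (1-based) of the `(2l+4) × (2l+2)` integer matrix
`B_{l,l+1}` (for the reversed reset one-counter shift). -/
def Bent (N l : ℕ) (i j : ℕ) : ℤ :=
  if i = 1 ∧ j = l + 2 then (N : ℤ)
  else if i = j ∧ 2 ≤ i ∧ i ≤ 2 * l + 2 ∧ i ≠ l + 2 then 1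
  else if i = 2 * l + 4 ∧ j = 1 then 1
  else if i = 2 * l + 3 ∧ j = 2 then 1
  else if i = j + 1 ∧ 2 ≤ i ∧ i ≤ l + 2 then -1
  else 0

/-- The matrix `B_{l,l+1}`, with explicitly given size `m × n`. -/
def Bmat (N l m n : ℕ) : Matrix (Fin m) (Fin n) ℤ :=
  Matrix.of fun i j => Bent N l (i.1 + 1) (j.1 + 1)

namespace Stmt7Aux

def Zf (l : ℕ) (z : Fin (2 * l + 4) → ℤ) : ℕ → ℤ :=
  fun n => if h : n + 2 < 2 * l + 4 then z ⟨n + 2, h⟩ else 0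

def Gf (l : ℕ) (x : Fin (2 * l + 2) → ℤ) : ℕ → ℤ :=
  fun n => if h : n + 1 < 2 * l + 2 then x ⟨n + 1, h⟩ else 0

def xfun (l : ℕ) (z : Fin (2 * l + 4) → ℤ) (c : ℤ) (n : ℕ) : ℤ :=
  if n = 0 then z ⟨2 * l + 3, by omega⟩
  else if n ≤ l then z ⟨2 * l + 2, by omega⟩ + ∑ k ∈ Finset.range (n - 1), Zf l z k
  else if n = l + 1 then c
  else if h : n < 2 * l + 2 then z ⟨n, by omega⟩ else 0

def xdef (l : ℕ) (z : Fin (2 * l + 4) → ℤ) (c : ℤ) : Fin (2 * l + 2) → ℤ :=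
  fun j => xfun l z c j.1

lemma xdef_mk (l : ℕ) (z : Fin (2 * l + 4) → ℤ) (c : ℤ) (n : ℕ) (hn : n < 2 * l + 2) :
    xdef l z c ⟨n, hn⟩ = xfun l z c n := rfl

lemma xfun0 (l : ℕ) (z : Fin (2 * l + 4) → ℤ) (c : ℤ) :
    xfun l z c 0 = z ⟨2 * l + 3, by omega⟩ := by simp [xfun]

lemma xfun_mid (l : ℕ) (z : Fin (2 * l + 4) → ℤ) (c : ℤ) (n mm : ℕ)
    (hmm : mm + 1 = n) (h1 : 1 ≤ n) (h2 : n ≤ l) :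
    xfun l z c n = z ⟨2 * l + 2, by omega⟩ + ∑ k ∈ Finset.range mm, Zf l z k := by
  unfold xfun
  rw [if_neg (by omega), if_pos h2, show n - 1 = mm by omega]

lemma xfun_l1 (l : ℕ) (z : Fin (2 * l + 4) → ℤ) (c : ℤ) :
    xfun l z c (l + 1) = c := by
  unfold xfun
  rw [if_neg (by omega), if_neg (by omega), if_pos rfl]

lemma xfun_hi (l : ℕ) (z : Fin (2 * l + 4) → ℤ) (c : ℤ) (n : ℕ)
    (h1 : l + 2 ≤ n) (h2 : n < 2 * l + 2) :
    xfun l z c n = z ⟨n, by omega⟩ := by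
  unfold xfun
  rw [if_neg (by omega), if_neg (by omega), if_neg (by omega), dif_pos h2]

lemma rowval (N l : ℕ) (x : Fin (2 * l + 2) → ℤ) (i : ℕ) (hi : i < 2 * l + 4)
    (a : ℕ) (ha : a < 2 * l + 2) (b : ℕ) (hb : b < 2 * l + 2) (ca cb : ℤ)
    (h : ∀ j : ℕ, j < 2 * l + 2 → Bent N l (i + 1) (j + 1)
        = (if j = a then ca else 0) + (if j = b then cb else 0)) :
    (Bmat N l (2 * l + 4) (2 * l + 2)).mulVec x ⟨i, hi⟩
      = ca * x ⟨a, ha⟩ + cb * x ⟨b, hb⟩ := by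
  have hg : ∀ j : Fin (2 * l + 2), Bmat N l (2 * l + 4) (2 * l + 2) ⟨i, hi⟩ j
      = (if j = (⟨a, ha⟩ : Fin (2 * l + 2)) then ca else 0)
        + (if j = (⟨b, hb⟩ : Fin (2 * l + 2)) then cb else 0) := by
    intro j
    have := h j.1 j.2
    simpa [Bmat, Fin.ext_iff] using this
  simp only [Matrix.mulVec, dotProduct]
  calc ∑ j, Bmat N l (2 * l + 4) (2 * l + 2) ⟨i, hi⟩ j * x j
      = ∑ j, ((if j = (⟨a, ha⟩ : Fin (2 * l + 2)) then ca else 0)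
        + (if j = (⟨b, hb⟩ : Fin (2 * l + 2)) then cb else 0)) * x j :=
        Finset.sum_congr rfl fun j _ => by rw [hg j]
    _ = ca * x ⟨a, ha⟩ + cb * x ⟨b, hb⟩ := by
        simp [add_mul, ite_mul, Finset.sum_add_distrib, Finset.sum_ite_eq']

lemma row0 (N l : ℕ) (x : Fin (2 * l + 2) → ℤ) (i : ℕ) (h0 : i = 0) (hi : i < 2 * l + 4) :
    (Bmat N l (2 * l + 4) (2 * l + 2)).mulVec x ⟨i, hi⟩ = N * x ⟨l + 1, by omega⟩ := by
  subst h0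
  have := rowval N l x 0 hi (l + 1) (by omega) (l + 1) (by omega) N 0
    (by intro j hj; simp only [Bent]; split_ifs <;> (try simp_all) <;> omega)
  rw [this]; ring

lemma rowmid (N l : ℕ) (x : Fin (2 * l + 2) → ℤ) (i b : ℕ) (hb : i = b + 1)
    (h1 : 1 ≤ i) (h2 : i ≤ l) (hi : i < 2 * l + 4) :
    (Bmat N l (2 * l + 4) (2 * l + 2)).mulVec x ⟨i, hi⟩
      = x ⟨i, by omega⟩ - x ⟨b, by omega⟩ := by
  have := rowval N l x i hi i (by omega) b (by omega) 1 (-1)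
    (by intro j hj; simp only [Bent]; split_ifs <;> omega)
  rw [this]; ring

lemma rowl1 (N l : ℕ) (x : Fin (2 * l + 2) → ℤ) (i : ℕ) (h : i = l + 1)
    (hi : i < 2 * l + 4) :
    (Bmat N l (2 * l + 4) (2 * l + 2)).mulVec x ⟨i, hi⟩ = -x ⟨l, by omega⟩ := by
  subst h
  have := rowval N l x (l + 1) hi l (by omega) l (by omega) (-1) 0
    (by intro j hj; simp only [Bent]; split_ifs <;> omega)
  rw [this]; ring

lemma rowhigh (N l : ℕ) (x : Fin (2 * l + 2) → ℤ) (i : ℕ) (h1 : l + 2 ≤ i)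
    (h2 : i ≤ 2 * l + 1) (hi : i < 2 * l + 4) :
    (Bmat N l (2 * l + 4) (2 * l + 2)).mulVec x ⟨i, hi⟩ = x ⟨i, by omega⟩ := by
  have := rowval N l x i hi i (by omega) i (by omega) 1 0
    (by intro j hj; simp only [Bent]; split_ifs <;> omega)
  rw [this]; ring

lemma row2l2 (N l : ℕ) (x : Fin (2 * l + 2) → ℤ) (i : ℕ) (h : i = 2 * l + 2)
    (hi : i < 2 * l + 4) :
    (Bmat N l (2 * l + 4) (2 * l + 2)).mulVec x ⟨i, hi⟩ = x ⟨1, by omega⟩ := by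
  subst h
  have := rowval N l x (2 * l + 2) hi 1 (by omega) 1 (by omega) 1 0
    (by intro j hj; simp only [Bent]; split_ifs <;> (try simp_all) <;> omega)
  rw [this]; ring

lemma row2l3 (N l : ℕ) (x : Fin (2 * l + 2) → ℤ) (i : ℕ) (h : i = 2 * l + 3)
    (hi : i < 2 * l + 4) :
    (Bmat N l (2 * l + 4) (2 * l + 2)).mulVec x ⟨i, hi⟩ = x ⟨0, by omega⟩ := by
  subst h
  have := rowval N l x (2 * l + 3) hi 0 (by omega) 0 (by omega) 1 0
    (by intro j hj; simp only [Bent]; split_ifs <;> (try simp_all) <;> omega)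
  rw [this]; ring

lemma sum_fin_to_range (l : ℕ) (z : Fin (2 * l + 4) → ℤ) :
    (∑ k : Fin l, z ⟨k.1 + 2, by have := k.isLt; omega⟩)
      = ∑ k ∈ Finset.range l, Zf l z k := by
  rw [← Fin.sum_univ_eq_sum_range (Zf l z) l]
  refine Finset.sum_congr rfl fun k _ => ?_
  have hk : k.1 + 2 < 2 * l + 4 := by have := k.isLt; omega
  simp only [Zf, dif_pos hk]

end Stmt7Aux

set_option maxHeartbeats 1000000 in
open Stmt7Aux in
/-- Lemma 5.5: `z` lies in `B_{l,l+1} ℤ^{2l+2}` iff `N ∣ z₁`,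
`z₂ - z_{2l+3} + z_{2l+4} = 0` and `z₃ + ⋯ + z_{l+2} + z_{2l+3} = 0`. -/
theorem stmt7 (N l : ℕ) (hN : 0 < N) (hl : 2 ≤ l) (z : Fin (2 * l + 4) → ℤ) :
    (∃ x : Fin (2 * l + 2) → ℤ, z = (Bmat N l (2 * l + 4) (2 * l + 2)).mulVec x) ↔
      ((N : ℤ) ∣ z ⟨0, by omega⟩ ∧
        z ⟨1, by omega⟩ - z ⟨2 * l + 2, by omega⟩ + z ⟨2 * l + 3, by omega⟩ = 0 ∧
        (∑ k : Fin l, z ⟨k.1 + 2, by have := k.isLt; omega⟩) + z ⟨2 * l + 2, by omega⟩ = 0) := by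
  obtain ⟨m, rfl⟩ : ∃ m, l = m + 2 := ⟨l - 2, by omega⟩
  constructor
  · rintro ⟨x, rfl⟩
    refine ⟨⟨x ⟨(m + 2) + 1, by omega⟩, row0 N (m + 2) x 0 rfl (by omega)⟩, ?_, ?_⟩
    · have e1 := rowmid N (m + 2) x 1 0 rfl (by omega) (by omega) (by omega)
      have e2 := row2l2 N (m + 2) x (2 * (m + 2) + 2) rfl (by omega)
      have e3 := row2l3 N (m + 2) x (2 * (m + 2) + 3) rfl (by omega)
      rw [e1, e2, e3]; ring
    · have key := sum_fin_to_range (m + 2)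
        ((Bmat N (m + 2) (2 * (m + 2) + 4) (2 * (m + 2) + 2)).mulVec x)
      rw [key, Finset.sum_range_succ]
      have hmid : ∀ k ∈ Finset.range (m + 1),
          Zf (m + 2) ((Bmat N (m + 2) (2 * (m + 2) + 4) (2 * (m + 2) + 2)).mulVec x) k
            = Gf (m + 2) x (k + 1) - Gf (m + 2) x k := by
        intro k hk
        simp only [Finset.mem_range] at hk
        have h2 : k + 2 < 2 * (m + 2) + 4 := by omega
        have hg1 : k + 1 + 1 < 2 * (m + 2) + 2 := by omega
        have hg0 : k + 1 < 2 * (m + 2) + 2 := by omega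
        simp only [Zf, Gf, dif_pos h2, dif_pos hg1, dif_pos hg0]
        exact rowmid N (m + 2) x (k + 2) (k + 1) rfl (by omega) (by omega) h2
      rw [Finset.sum_congr rfl hmid, Finset.sum_range_sub (Gf (m + 2) x) (m + 1)]
      have glast : Zf (m + 2) ((Bmat N (m + 2) (2 * (m + 2) + 4) (2 * (m + 2) + 2)).mulVec x)
          (m + 1) = -x ⟨m + 2, by omega⟩ := by
        have h2 : m + 1 + 2 < 2 * (m + 2) + 4 := by omega
        simp only [Zf, dif_pos h2]
        exact rowl1 N (m + 2) x (m + 1 + 2) (by omega) h2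
      have g1 : Gf (m + 2) x (m + 1) = x ⟨m + 2, by omega⟩ := by
        have hh : m + 1 + 1 < 2 * (m + 2) + 2 := by omega
        simp only [Gf, dif_pos hh]
      have g0 : Gf (m + 2) x 0 = x ⟨1, by omega⟩ := by
        have hh : 0 + 1 < 2 * (m + 2) + 2 := by omega
        simp only [Gf, dif_pos hh]
      have e2 := row2l2 N (m + 2) x (2 * (m + 2) + 2) rfl (by omega)
      linarith [glast, g1, g0, e2]
  · rintro ⟨⟨c, hc⟩, h2, h3⟩
    refine ⟨xdef (m + 2) z c, ?_⟩
    have key := sum_fin_to_range (m + 2) z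
    rw [key, Finset.sum_range_succ] at h3
    funext i
    obtain ⟨i, hi⟩ := i
    by_cases h0 : i = 0
    · subst h0
      rw [row0 N (m + 2) (xdef (m + 2) z c) 0 rfl hi, xdef_mk, xfun_l1]
      exact hc
    by_cases hle : i ≤ m + 2
    · by_cases hone : i = 1
      · subst hone
        rw [rowmid N (m + 2) (xdef (m + 2) z c) 1 0 rfl (by omega) (by omega) hi,
          xdef_mk, xdef_mk, xfun_mid (m + 2) z c 1 0 rfl (by omega) (by omega), xfun0]
        simp only [Finset.range_zero, Finset.sum_empty, add_zero]
        linarith [h2]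
      · obtain ⟨j, rfl⟩ : ∃ j, i = j + 2 := ⟨i - 2, by omega⟩
        rw [rowmid N (m + 2) (xdef (m + 2) z c) (j + 2) (j + 1) rfl (by omega) (by omega) hi,
          xdef_mk, xdef_mk, xfun_mid (m + 2) z c (j + 2) (j + 1) rfl (by omega) (by omega),
          xfun_mid (m + 2) z c (j + 1) j rfl (by omega) (by omega),
          Finset.sum_range_succ]
        have hzf : Zf (m + 2) z j = z ⟨j + 2, by omega⟩ := by
          simp only [Zf, dif_pos (show j + 2 < 2 * (m + 2) + 4 by omega)]
        rw [hzf]; ring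
    by_cases hl1 : i = m + 3
    · subst hl1
      rw [rowl1 N (m + 2) (xdef (m + 2) z c) (m + 3) (by omega) hi, xdef_mk,
        xfun_mid (m + 2) z c (m + 2) (m + 1) rfl (by omega) (by omega)]
      have hzf : Zf (m + 2) z (m + 1) = z ⟨m + 3, by omega⟩ := by
        simp only [Zf, dif_pos (show m + 1 + 2 < 2 * (m + 2) + 4 by omega)]
      linarith [h3, hzf]
    by_cases hhi : i ≤ 2 * (m + 2) + 1
    · rw [rowhigh N (m + 2) (xdef (m + 2) z c) i (by omega) hhi hi, xdef_mk,
        xfun_hi (m + 2) z c i (by omega) (by omega)]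
    by_cases h22 : i = 2 * (m + 2) + 2
    · subst h22
      rw [row2l2 N (m + 2) (xdef (m + 2) z c) (2 * (m + 2) + 2) rfl hi, xdef_mk,
        xfun_mid (m + 2) z c 1 0 rfl (by omega) (by omega)]
      simp
    · have h23 : i = 2 * (m + 2) + 3 := by omega
      subst h23
      rw [row2l3 N (m + 2) (xdef (m + 2) z c) (2 * (m + 2) + 3) rfl hi, xdef_mk, xfun0]
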